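/- Fix N ≥ 1, d ∈ ℕ^{N+1}, and integers 0 ≤ r ≤ s ≤ min_i d_i. Then in ℚ[[q]]: Q^{s−r}_{d−r} = (Π_{t=s−r+1}^{s} (1 − q^t)) · Q^s_d, where d − r denotes the dimension vector obtained by subtracting r from every component of d. -/

import Mathlib

/-- `m` is a Kostant partition of the dimension vector `d` for the equioriented
type-A quiver with vertices `0, …, N`. -/
def IsKostant (N : ℕ) (d : ℕ → ℕ) (m : ℕ → ℕ → ℕ) : Prop :=
  (∀ i j : ℕ, ¬(i ≤ j ∧ j ≤ N) → m i j = 0) ∧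
  ∀ k ≤ N, d k = ∑ i ∈ Finset.range (k + 1), ∑ j ∈ Finset.Icc k N, m i j

/-- `c(m) = Σ_{1 ≤ i ≤ u ≤ j ≤ v ≤ N} m_{i−1,j−1} · m_{u,v}`. -/
def kpCodim (N : ℕ) (m : ℕ → ℕ → ℕ) : ℕ :=
  ∑ i ∈ Finset.Icc 1 N, ∑ u ∈ Finset.Icc i N, ∑ j ∈ Finset.Icc u N,
    ∑ v ∈ Finset.Icc j N, m (i - 1) (j - 1) * m u v

/-- `P_s = Π_{t=1}^s (1 − q^t)⁻¹ ∈ ℚ⟦q⟧`. -/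
noncomputable def Pq (s : ℕ) : PowerSeries ℚ :=
  ∏ t ∈ Finset.Icc 1 s, (1 - (PowerSeries.X : PowerSeries ℚ) ^ t)⁻¹

/-- `P_m = Π_{0 ≤ i ≤ j ≤ N} P_{m_{ij}}`. -/
noncomputable def PqKP (N : ℕ) (m : ℕ → ℕ → ℕ) : PowerSeries ℚ :=
  ∏ i ∈ Finset.range (N + 1), ∏ j ∈ Finset.Icc i N, Pq (m i j)

/-- `Q^r_d = Σ_{m ⊢ d, m_{0N} = r} q^{c(m)} P_m ∈ ℚ⟦q⟧`. -/
noncomputable def Qq (N : ℕ) (d : ℕ → ℕ) (r : ℕ) : PowerSeries ℚ :=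
  ∑ᶠ m ∈ {m : ℕ → ℕ → ℕ | IsKostant N d m ∧ m 0 N = r},
    (PowerSeries.X : PowerSeries ℚ) ^ kpCodim N m * PqKP N m

/-- `min_{0 ≤ i ≤ N} d_i`. -/
def dmin (N : ℕ) (d : ℕ → ℕ) : ℕ := (Finset.range (N + 1)).inf' ⟨0, by simp⟩ d

/- ### Auxiliary lemmas -/

private lemma one_sub_X_pow_mul_inv (t : ℕ) (ht : t ≠ 0) :
    (1 - (PowerSeries.X : PowerSeries ℚ) ^ t) *
      (1 - (PowerSeries.X : PowerSeries ℚ) ^ t)⁻¹ = 1 := by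
  apply PowerSeries.mul_inv_cancel
  simp [ht]

private lemma Pq_split (a b : ℕ) (hab : a ≤ b) :
    Pq a = (∏ t ∈ Finset.Icc (a + 1) b, (1 - (PowerSeries.X : PowerSeries ℚ) ^ t)) * Pq b := by
  have h : Pq a * ∏ t ∈ Finset.Ioc a b, (1 - (PowerSeries.X : PowerSeries ℚ) ^ t)⁻¹ = Pq b := by
    unfold Pq
    rw [show Finset.Icc 1 a = Finset.Ioc 0 a from by rw [← Finset.Icc_add_one_left_eq_Ioc]; rfl,
        show Finset.Icc 1 b = Finset.Ioc 0 b from by rw [← Finset.Icc_add_one_left_eq_Ioc]; rfl]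
    exact Finset.prod_Ioc_consecutive _ (Nat.zero_le a) hab
  rw [show Finset.Icc (a + 1) b = Finset.Ioc a b from by rw [← Finset.Icc_add_one_left_eq_Ioc], ← h,
    mul_left_comm, ← Finset.prod_mul_distrib]
  rw [Finset.prod_congr rfl fun t ht => one_sub_X_pow_mul_inv t
    (by have := Finset.mem_Ioc.mp ht; omega)]
  simp

private lemma kostant_finite (N : ℕ) (d : ℕ → ℕ) (s : ℕ) :
    {m : ℕ → ℕ → ℕ | IsKostant N d m ∧ m 0 N = s}.Finite := by
  classical
  set B := (Finset.range (N + 1)).sup d with hB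
  rw [← Set.finite_coe_iff]
  have hbound : ∀ m ∈ {m : ℕ → ℕ → ℕ | IsKostant N d m ∧ m 0 N = s}, ∀ i j, m i j ≤ B := by
    intro m hm i j
    rcases Classical.em (i ≤ j ∧ j ≤ N) with h | h
    · obtain ⟨⟨hsup, hsum⟩, _⟩ := hm
      have hiN : i ≤ N := le_trans h.1 h.2
      have h1 : m i j ≤ ∑ j' ∈ Finset.Icc i N, m i j' :=
        Finset.single_le_sum (fun _ _ => Nat.zero_le _) (Finset.mem_Icc.mpr ⟨h.1, h.2⟩)
      have h2 : (∑ j' ∈ Finset.Icc i N, m i j')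
          ≤ ∑ i' ∈ Finset.range (i + 1), ∑ j' ∈ Finset.Icc i N, m i' j' :=
        Finset.single_le_sum (f := fun i' => ∑ j' ∈ Finset.Icc i N, m i' j')
          (fun _ _ => Nat.zero_le _) (Finset.self_mem_range_succ i)
      calc m i j ≤ _ := le_trans h1 h2
        _ = d i := (hsum i hiN).symm
        _ ≤ B := Finset.le_sup (Finset.mem_range.mpr (Nat.lt_succ_of_le hiN))
    · rw [hm.1.1 i j h]; exact Nat.zero_le _
  apply Finite.of_injective
    (fun m : {m : ℕ → ℕ → ℕ | IsKostant N d m ∧ m 0 N = s} =>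
      (fun i j : Fin (N + 1) =>
        (⟨m.1 i j, Nat.lt_succ_of_le (hbound m.1 m.2 i j)⟩ : Fin (B + 1))))
  intro m m' hmm'
  apply Subtype.ext
  funext i j
  rcases Classical.em (i ≤ j ∧ j ≤ N) with h | h
  · have hiN : i < N + 1 := by omega
    have hjN : j < N + 1 := by omega
    have := congrFun (congrFun hmm' ⟨i, hiN⟩) ⟨j, hjN⟩
    simpa using congrArg Fin.val this
  · rw [m.2.1.1 i j h, m'.2.1.1 i j h]

private def eAdd (N r : ℕ) (m : ℕ → ℕ → ℕ) : ℕ → ℕ → ℕ :=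
  fun i j => m i j + if i = 0 ∧ j = N then r else 0

private def eSub (N r : ℕ) (m : ℕ → ℕ → ℕ) : ℕ → ℕ → ℕ :=
  fun i j => m i j - if i = 0 ∧ j = N then r else 0

private lemma sum_eAdd (N r : ℕ) (m : ℕ → ℕ → ℕ) (k : ℕ) (hk : k ≤ N) :
    ∑ i ∈ Finset.range (k + 1), ∑ j ∈ Finset.Icc k N, eAdd N r m i j
      = (∑ i ∈ Finset.range (k + 1), ∑ j ∈ Finset.Icc k N, m i j) + r := by
  unfold eAdd
  simp only [Finset.sum_add_distrib]
  congr 1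
  have h1 : ∀ i ∈ Finset.range (k + 1),
      (∑ j ∈ Finset.Icc k N, if i = 0 ∧ j = N then r else 0) = if i = 0 then r else 0 := by
    intro i _
    rcases eq_or_ne i 0 with h | h
    · subst h
      simp only [true_and]
      rw [Finset.sum_ite_eq' (Finset.Icc k N) N (fun _ => r)]
      simp [hk]
    · simp [h]
  rw [Finset.sum_congr rfl h1, Finset.sum_ite_eq' (Finset.range (k + 1)) 0 (fun _ => r)]
  simp

private lemma kpCodim_eAdd (N r : ℕ) (m : ℕ → ℕ → ℕ) :
    kpCodim N (eAdd N r m) = kpCodim N m := by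
  unfold kpCodim
  refine Finset.sum_congr rfl fun i hi => Finset.sum_congr rfl fun u hu =>
    Finset.sum_congr rfl fun j hj => Finset.sum_congr rfl fun v hv => ?_
  simp only [Finset.mem_Icc] at hi hu hj hv
  have h1 : ¬(i - 1 = 0 ∧ j - 1 = N) := by omega
  have h2 : ¬(u = 0 ∧ v = N) := by omega
  simp [eAdd, h1, h2]

private lemma PqKP_split (N : ℕ) (m : ℕ → ℕ → ℕ) :
    PqKP N m =
      ((∏ i ∈ Finset.range N, ∏ j ∈ Finset.Icc (i + 1) N, Pq (m (i + 1) j)) *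
        ∏ j ∈ Finset.range N, Pq (m 0 j)) * Pq (m 0 N) := by
  unfold PqKP
  rw [Finset.prod_range_succ',
    show Finset.Icc 0 N = Finset.range (N + 1) from by ext x; simp [Nat.lt_succ_iff],
    Finset.prod_range_succ, ← mul_assoc]

private lemma PqKP_eAdd (N r : ℕ) (m : ℕ → ℕ → ℕ) :
    PqKP N (eAdd N r m) =
      ((∏ i ∈ Finset.range N, ∏ j ∈ Finset.Icc (i + 1) N, Pq (m (i + 1) j)) *
        ∏ j ∈ Finset.range N, Pq (m 0 j)) * Pq (m 0 N + r) := by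
  rw [PqKP_split]
  have h1 : ∀ i j : ℕ, ¬(i = 0 ∧ j = N) → eAdd N r m i j = m i j := by
    intro i j h; simp [eAdd, h]
  refine congrArg₂ (· * ·) (congrArg₂ (· * ·) ?_ ?_) ?_
  · exact Finset.prod_congr rfl fun i _ => Finset.prod_congr rfl fun j _ =>
      congrArg Pq (h1 _ _ (by omega))
  · exact Finset.prod_congr rfl fun j hj =>
      congrArg Pq (h1 0 j (by have := Finset.mem_range.mp hj; omega))
  · exact congrArg Pq (by simp [eAdd])

/-- The shift identity `Q^{s−r}_{d−r} = (Π_{t=s−r+1}^{s} (1 − q^t)) · Q^s_d`. -/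
theorem stmt6 (N : ℕ) (hN : 1 ≤ N) (d : ℕ → ℕ) (r s : ℕ) (hrs : r ≤ s)
    (hs : s ≤ dmin N d) :
    Qq N (fun i => d i - r) (s - r) =
      (∏ t ∈ Finset.Icc (s - r + 1) s, (1 - (PowerSeries.X : PowerSeries ℚ) ^ t)) *
        Qq N d s := by
  classical
  have hdr : ∀ i ≤ N, r ≤ d i := fun i hi =>
    le_trans hrs (le_trans hs (Finset.inf'_le d (Finset.mem_range.mpr (Nat.lt_succ_of_le hi))))
  have hfin' := kostant_finite N (fun i => d i - r) (s - r)
  have hfin := kostant_finite N d s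
  have hie : ∀ m : ℕ → ℕ → ℕ, eSub N r (eAdd N r m) = m := by
    intro m; funext i j; simp [eAdd, eSub]
  have hmapsto : ∀ m, IsKostant N (fun i => d i - r) m ∧ m 0 N = s - r →
      IsKostant N d (eAdd N r m) ∧ eAdd N r m 0 N = s := by
    rintro m ⟨⟨hsup, hsum⟩, h0⟩
    refine ⟨⟨?_, ?_⟩, ?_⟩
    · intro i j hij
      have hnot : ¬(i = 0 ∧ j = N) := by
        rintro ⟨rfl, rfl⟩; exact hij ⟨Nat.zero_le _, le_refl _⟩
      simp [eAdd, hnot, hsup i j hij]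
    · intro k hk
      rw [sum_eAdd N r m k hk]
      have h1 : d k - r = ∑ i ∈ Finset.range (k + 1), ∑ j ∈ Finset.Icc k N, m i j :=
        hsum k hk
      have h2 := hdr k hk
      omega
    · show m 0 N + (if (0 : ℕ) = 0 ∧ N = N then r else 0) = s
      rw [if_pos ⟨rfl, rfl⟩, h0]
      omega
  have hmapsfrom : ∀ m, IsKostant N d m ∧ m 0 N = s →
      IsKostant N (fun i => d i - r) (eSub N r m) ∧ eSub N r m 0 N = s - r := by
    rintro m ⟨⟨hsup, hsum⟩, h0⟩
    have hei : eAdd N r (eSub N r m) = m := by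
      funext i j
      simp only [eAdd, eSub]
      split
      · rename_i h
        have hmn : m i j = s := by rw [h.1, h.2]; exact h0
        omega
      · omega
    refine ⟨⟨?_, ?_⟩, ?_⟩
    · intro i j hij; simp [eSub, hsup i j hij]
    · intro k hk
      have h1 := sum_eAdd N r (eSub N r m) k hk
      rw [hei] at h1
      rw [← hsum k hk] at h1
      show d k - r = _
      omega
    · show m 0 N - (if (0 : ℕ) = 0 ∧ N = N then r else 0) = s - r
      rw [if_pos ⟨rfl, rfl⟩, h0]
  rw [Qq, Qq, ← hfin'.coe_toFinset, ← hfin.coe_toFinset, finsum_mem_coe_finset,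
    finsum_mem_coe_finset, Finset.mul_sum]
  refine Finset.sum_nbij' (eAdd N r) (eSub N r) ?_ ?_ ?_ ?_ ?_
  · intro m hm
    rw [Set.Finite.mem_toFinset] at hm ⊢
    exact hmapsto m hm
  · intro m hm
    rw [Set.Finite.mem_toFinset] at hm ⊢
    exact hmapsfrom m hm
  · intro m _; exact hie m
  · intro m hm
    rw [Set.Finite.mem_toFinset] at hm
    funext i j
    simp only [eAdd, eSub]
    split
    · rename_i h
      have hmn : m i j = s := by rw [h.1, h.2]; exact hm.2
      omega
    · omega
  · intro m hm
    rw [Set.Finite.mem_toFinset] at hm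
    obtain ⟨hK, h0⟩ := hm
    rw [kpCodim_eAdd, PqKP_eAdd, PqKP_split, h0,
      Nat.sub_add_cancel hrs, Pq_split (s - r) s (Nat.sub_le s r)]
    ring
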